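/- With notation as in the disk–simplex homeomorphism: the map h restricts to a homeomorphism from S^{n−1} ∩ X onto ι(Δ^{n−1}), where ι : Δ^{n−1} → Δ^n, ι(x) = (x, 1 − ∑_{j=1}^{n−1} x_j) is the inclusion of the last face of Δ^n. In particular, for x ∈ S^{n−1} ∩ X one has ‖h(x)‖₁ = 1. -/
import Mathlib

/-- The `ℓ¹` norm on `ℝ^n`. -/
def norm1 {n : ℕ} (x : Fin n → ℝ) : ℝ := ∑ i, |x i|

/-- The `ℓ²` norm on `ℝ^n`. -/
noncomputable def norm2 {n : ℕ} (x : Fin n → ℝ) : ℝ := Real.sqrt (∑ i, x i ^ 2)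

lemma norm1_pos {n : ℕ} {x : Fin n → ℝ} (hx : x ≠ 0) : 0 < norm1 x := by
  obtain ⟨i, hi⟩ := Function.ne_iff.mp hx
  calc (0:ℝ) < |x i| := abs_pos.mpr hi
    _ ≤ norm1 x := Finset.single_le_sum (f := fun i => |x i|)
        (fun i _ => abs_nonneg _) (Finset.mem_univ i)

lemma norm2_pos {n : ℕ} {x : Fin n → ℝ} (hx : x ≠ 0) : 0 < norm2 x := by
  obtain ⟨i, hi⟩ := Function.ne_iff.mp hx
  apply Real.sqrt_pos.mpr
  calc (0:ℝ) < x i ^ 2 := pow_two_pos_of_ne_zero hi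
    _ ≤ ∑ j, x j ^ 2 := Finset.single_le_sum (f := fun j => x j ^ 2)
        (fun j _ => sq_nonneg _) (Finset.mem_univ i)

lemma continuous_norm1 {n : ℕ} : Continuous (norm1 (n := n)) :=
  continuous_finset_sum _ fun i _ => (continuous_apply i).abs

lemma continuous_norm2 {n : ℕ} : Continuous (norm2 (n := n)) :=
  Real.continuous_sqrt.comp (continuous_finset_sum _ fun i _ => (continuous_apply i).pow 2)

lemma norm1_smul {n : ℕ} (c : ℝ) (x : Fin n → ℝ) :
    norm1 (fun i => c * x i) = |c| * norm1 x := by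
  unfold norm1
  rw [Finset.mul_sum]
  exact Finset.sum_congr rfl fun i _ => by rw [abs_mul]

lemma norm2_smul {n : ℕ} (c : ℝ) (x : Fin n → ℝ) :
    norm2 (fun i => c * x i) = |c| * norm2 x := by
  unfold norm2
  rw [← Real.sqrt_sq_eq_abs, ← Real.sqrt_mul (sq_nonneg c)]
  congr 1
  rw [Finset.mul_sum]
  exact Finset.sum_congr rfl fun i _ => by ring

lemma norm2_abs {n : ℕ} (x : Fin n → ℝ) : norm2 (fun i => |x i|) = norm2 x := by
  unfold norm2; congr 1; exact Finset.sum_congr rfl fun i _ => by rw [sq_abs]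

theorem stmt_8 (n : ℕ) (τ : Fin (n + 1) → ℝ) (hτ : ∀ i, τ i = 1 ∨ τ i = -1) :
    let X : Set (Fin (n + 1) → ℝ) := {x | ∀ i, 0 ≤ τ i * x i}
    let S : Set (Fin (n + 1) → ℝ) := {x | norm2 x = 1}
    let Δ' : Set (Fin n → ℝ) := {x | (∀ i, 0 ≤ x i) ∧ norm1 x ≤ 1}
    let ι : (Fin n → ℝ) → (Fin (n + 1) → ℝ) := fun x => Fin.snoc x (1 - ∑ j, x j)
    let h : (Fin (n + 1) → ℝ) → (Fin (n + 1) → ℝ) := fun x =>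
      if x = 0 then 0 else fun i => norm2 x / norm1 x * (τ i * x i)
    (∀ x ∈ S ∩ X, norm1 (h x) = 1) ∧
    ∃ e : (S ∩ X : Set (Fin (n + 1) → ℝ)) ≃ₜ (ι '' Δ' : Set (Fin (n + 1) → ℝ)),
      ∀ x : (S ∩ X : Set (Fin (n + 1) → ℝ)), (e x : Fin (n + 1) → ℝ) = h x := by
  intro X S Δ' ι h
  have hττ : ∀ i, τ i * τ i = 1 := fun i => by rcases hτ i with h1|h1 <;> rw [h1] <;> norm_num
  have habsτ : ∀ i, |τ i| = 1 := fun i => by rcases hτ i with h1|h1 <;> rw [h1] <;> norm_num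
  have habs : ∀ x ∈ X, ∀ i, |x i| = τ i * x i := by
    intro x hx i
    have h0 : 0 ≤ τ i * x i := hx i
    rw [← abs_of_nonneg h0, abs_mul, habsτ, one_mul]
  have hne : ∀ x ∈ S ∩ X, x ≠ 0 := by
    rintro x ⟨hxS, -⟩ rfl
    have : norm2 (0 : Fin (n+1) → ℝ) = 1 := hxS
    simp [norm2] at this
  set T : Set (Fin (n + 1) → ℝ) := {y | (∀ i, 0 ≤ y i) ∧ ∑ i, y i = 1} with hT
  have yne : ∀ y ∈ T, y ≠ 0 := by
    rintro y ⟨-, hy1⟩ rfl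
    simp at hy1
  set f : (Fin (n+1) → ℝ) → (Fin (n+1) → ℝ) := fun x i => (norm1 x)⁻¹ * |x i| with hf
  set g : (Fin (n+1) → ℝ) → (Fin (n+1) → ℝ) := fun y i => (norm2 y)⁻¹ * (τ i * y i) with hg
  -- h agrees with f on S ∩ X
  have hh : ∀ x ∈ S ∩ X, h x = f x := by
    intro x hx
    have hS : norm2 x = 1 := hx.1
    simp only [h, if_neg (hne x hx)]
    funext i
    simp only [hf]
    rw [hS, habs x hx.2 i]
    ring
  -- part 1
  have part1 : ∀ x ∈ S ∩ X, norm1 (h x) = 1 := by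
    intro x hx
    rw [hh x hx, hf, norm1_smul, abs_of_pos (inv_pos.mpr (norm1_pos (hne x hx)))]
    have : norm1 (fun i => |x i|) = norm1 x := by
      unfold norm1; exact Finset.sum_congr rfl fun i _ => by rw [abs_abs]
    rw [this, inv_mul_cancel₀ (norm1_pos (hne x hx)).ne']
  have hn1abs : ∀ x : Fin (n+1) → ℝ, norm1 (fun i => |x i|) = norm1 x := by
    intro x; unfold norm1; exact Finset.sum_congr rfl fun i _ => by rw [abs_abs]
  have hn2τ : ∀ y : Fin (n+1) → ℝ, norm2 (fun i => τ i * y i) = norm2 y := by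
    intro y; unfold norm2; congr 1
    refine Finset.sum_congr rfl fun i _ => ?_
    show (τ i * y i) ^ 2 = y i ^ 2
    rcases hτ i with h1|h1 <;> rw [h1] <;> ring
  -- memberships
  have hfmem : ∀ x ∈ S ∩ X, f x ∈ T := by
    intro x hx
    have h1 := norm1_pos (hne x hx)
    constructor
    · intro i; exact mul_nonneg (inv_pos.mpr h1).le (abs_nonneg _)
    · show ∑ i, (norm1 x)⁻¹ * |x i| = 1
      rw [← Finset.mul_sum]
      exact inv_mul_cancel₀ h1.ne'
  have hgmem : ∀ y ∈ T, g y ∈ S ∩ X := by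
    intro y hy
    have h2 := norm2_pos (yne y hy)
    constructor
    · show norm2 (g y) = 1
      rw [hg, norm2_smul, hn2τ, abs_of_pos (inv_pos.mpr h2),
        inv_mul_cancel₀ h2.ne']
    · intro i
      show 0 ≤ τ i * ((norm2 y)⁻¹ * (τ i * y i))
      have : τ i * ((norm2 y)⁻¹ * (τ i * y i)) = (norm2 y)⁻¹ * ((τ i * τ i) * y i) := by ring
      rw [this, hττ, one_mul]
      exact mul_nonneg (inv_pos.mpr h2).le (hy.1 i)
  -- inverses
  have hn2f : ∀ x ∈ S ∩ X, norm2 (f x) = (norm1 x)⁻¹ := by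
    intro x hx
    have hS : norm2 x = 1 := hx.1
    rw [hf, norm2_smul, norm2_abs, hS, mul_one,
      abs_of_pos (inv_pos.mpr (norm1_pos (hne x hx)))]
  have hgf : ∀ x ∈ S ∩ X, g (f x) = x := by
    intro x hx
    have h1 := norm1_pos (hne x hx)
    funext i
    show (norm2 (f x))⁻¹ * (τ i * f x i) = x i
    rw [hn2f x hx, inv_inv]
    show norm1 x * (τ i * ((norm1 x)⁻¹ * |x i|)) = x i
    rw [habs x hx.2 i,
      show norm1 x * (τ i * ((norm1 x)⁻¹ * (τ i * x i)))
        = (norm1 x * (norm1 x)⁻¹) * ((τ i * τ i) * x i) by ring,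
      mul_inv_cancel₀ h1.ne', hττ, one_mul, one_mul]
  have hn1g : ∀ y ∈ T, norm1 (g y) = (norm2 y)⁻¹ := by
    intro y hy
    have h2 := norm2_pos (yne y hy)
    rw [hg, norm1_smul, abs_of_pos (inv_pos.mpr h2)]
    have : norm1 (fun i => τ i * y i) = 1 := by
      unfold norm1
      rw [show (∑ i, |τ i * y i|) = ∑ i, y i from
        Finset.sum_congr rfl fun i _ => by
          rw [abs_mul, habsτ, one_mul, abs_of_nonneg (hy.1 i)]]
      exact hy.2
    rw [this, mul_one]
  have hfg : ∀ y ∈ T, f (g y) = y := by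
    intro y hy
    have h2 := norm2_pos (yne y hy)
    funext i
    show (norm1 (g y))⁻¹ * |g y i| = y i
    rw [hn1g y hy, inv_inv]
    show norm2 y * |(norm2 y)⁻¹ * (τ i * y i)| = y i
    rw [abs_mul, abs_mul, habsτ, one_mul, abs_of_pos (inv_pos.mpr h2),
      abs_of_nonneg (hy.1 i)]
    rw [show norm2 y * ((norm2 y)⁻¹ * y i) = (norm2 y * (norm2 y)⁻¹) * y i by ring,
      mul_inv_cancel₀ h2.ne', one_mul]
  -- identification of the image
  have hTeq : ι '' Δ' = T := by
    ext y
    constructor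
    · rintro ⟨x, ⟨hx0, hx1⟩, rfl⟩
      have hsum : ∑ j, x j = norm1 x :=
        Finset.sum_congr rfl fun i _ => (abs_of_nonneg (hx0 i)).symm
      constructor
      · intro i
        refine Fin.lastCases ?_ ?_ i
        · simp only [ι, Fin.snoc_last]
          have hx1' : norm1 x ≤ 1 := hx1
          linarith [hsum]
        · intro j
          simp only [ι, Fin.snoc_castSucc]
          exact hx0 j
      · show ∑ i, ι x i = 1
        simp only [ι]
        rw [Fin.sum_univ_castSucc]
        simp only [Fin.snoc_castSucc, Fin.snoc_last]
        ring
    · rintro ⟨hy0, hy1⟩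
      refine ⟨Fin.init y, ⟨fun i => hy0 _, ?_⟩, ?_⟩
      · have h1 : norm1 (Fin.init y) = ∑ i : Fin n, y (Fin.castSucc i) :=
          Finset.sum_congr rfl fun i _ => abs_of_nonneg (hy0 _)
        rw [h1]
        have h2 : (∑ i : Fin n, y (Fin.castSucc i)) + y (Fin.last n) = 1 := by
          rw [← Fin.sum_univ_castSucc]; exact hy1
        have h3 := hy0 (Fin.last n)
        linarith
      · show ι (Fin.init y) = y
        simp only [ι]
        have hl : 1 - ∑ j, Fin.init y j = y (Fin.last n) := by
          have h2 : (∑ i : Fin n, y (Fin.castSucc i)) + y (Fin.last n) = 1 := by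
            rw [← Fin.sum_univ_castSucc]; exact hy1
          have h3 : ∑ j : Fin n, Fin.init y j = ∑ i : Fin n, y (Fin.castSucc i) := rfl
          rw [h3]; linarith
        rw [hl]
        exact Fin.snoc_init_self y
  -- construct the homeomorphism
  refine ⟨part1, ?_⟩
  let e1 : (S ∩ X : Set (Fin (n+1) → ℝ)) ≃ₜ (T : Set (Fin (n+1) → ℝ)) :=
    { toFun := fun x => ⟨f x, hfmem x x.2⟩
      invFun := fun y => ⟨g y, hgmem y y.2⟩
      left_inv := fun x => Subtype.ext (hgf x x.2)
      right_inv := fun y => Subtype.ext (hfg y y.2)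
      continuous_toFun := by
        apply Continuous.subtype_mk
        refine continuous_pi fun i => Continuous.mul ?_ ?_
        · exact ((continuous_norm1.comp continuous_subtype_val).inv₀
            fun x => (norm1_pos (hne x x.2)).ne')
        · exact ((continuous_apply i).abs.comp continuous_subtype_val)
      continuous_invFun := by
        apply Continuous.subtype_mk
        refine continuous_pi fun i => Continuous.mul ?_ ?_
        · exact ((continuous_norm2.comp continuous_subtype_val).inv₀
            fun y => (norm2_pos (yne y y.2)).ne')
        · exact continuous_const.mul ((continuous_apply i).comp continuous_subtype_val) }
  refine ⟨e1.trans (Homeomorph.setCongr hTeq.symm), fun x => ?_⟩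
  show f x = h x
  rw [hh x x.2]
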